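/- Let n ≥ 2 and let T be any binary tree structure. For every m ≥ 1, the growth function of the class of decision trees with structure T and leaf labels in {1,…,n} satisfies τ_T(m) ≤ Σ_{a=1}^{min{m,n,L_T}} (n)_a · π^a_T(m), where (n)_a = n(n−1)⋯(n−a+1) is the falling factorial; moreover equality holds whenever n = 2 or L_T = 2. -/

import Mathlib

/-- A `c`-partition of a finite set `S`: a set of `c` pairwise disjoint nonempty
subsets (parts) whose union is `S`. -/
def IsPartition {α : Type*} (S : Finset α) (c : ℕ) (P : Finset (Finset α)) : Prop :=
  P.card = c ∧ (∀ p ∈ P, p.Nonempty) ∧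
    (∀ p ∈ P, ∀ q ∈ P, p ≠ q → Disjoint p q) ∧ (∀ x, x ∈ S ↔ ∃ p ∈ P, x ∈ p)

/-- A binary tree structure: either a leaf, or an internal node with a left and a
right subtree structure. -/
inductive TreeStruct : Type where
  | leaf : TreeStruct
  | node : TreeStruct → TreeStruct → TreeStruct
deriving DecidableEq

namespace TreeStruct

/-- The number of leaves of a binary tree structure. -/
def leaves : TreeStruct → ℕ
  | leaf => 1
  | node l r => l.leaves + r.leaves

/-- The number of internal nodes of a binary tree structure. -/
def internals : TreeStruct → ℕ
  | leaf => 0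
  | node l r => l.internals + r.internals + 1

end TreeStruct

/-- A decision tree on `ℝ^ℓ` with labels in `Y`: every leaf carries a label and every
internal node carries a decision rule `(i, θ, s)` with feature `i`, threshold `θ` and
sign `s` (`true` codes `+1`, `false` codes `-1`). -/
inductive DTree (ℓ : ℕ) (Y : Type) : Type where
  | leaf : Y → DTree ℓ Y
  | node : Fin ℓ → ℝ → Bool → DTree ℓ Y → DTree ℓ Y → DTree ℓ Y

namespace DTree

/-- The output of a decision tree on an example `x`: at a node with rule `(i, θ, s)`,
`x` is sent to the left subtree if `sign (x^i - θ) = s` (i.e. `(θ < x^i) = s`) and to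
the right subtree otherwise. -/
noncomputable def eval {ℓ : ℕ} {Y : Type} : DTree ℓ Y → (Fin ℓ → ℝ) → Y
  | leaf y, _ => y
  | node i θ s l r, x => if decide (θ < x i) = s then l.eval x else r.eval x

/-- The underlying structure of a decision tree. -/
def shape {ℓ : ℕ} {Y : Type} : DTree ℓ Y → TreeStruct
  | leaf _ => .leaf
  | node _ _ _ l r => .node l.shape r.shape

end DTree

/-- A partition `P` of a sample `S ⊆ ℝ^ℓ` is realizable by the class of decision trees
with structure `T` if there is a decision tree `t` with structure `T` (labels in `ℕ`)
such that two points of `S` lie in the same part of `P` iff `t` outputs the same label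
on them. -/
def TreeRealizable (ℓ : ℕ) (T : TreeStruct) (S : Finset (Fin ℓ → ℝ))
    (P : Finset (Finset (Fin ℓ → ℝ))) : Prop :=
  ∃ t : DTree ℓ ℕ, t.shape = T ∧
    ∀ x ∈ S, ∀ y ∈ S, ((∃ p ∈ P, x ∈ p ∧ y ∈ p) ↔ t.eval x = t.eval y)

/-- `PartSet ℓ T a S` : the set of `a`-partitions of `S` realizable by the tree class `T`. -/
def PartSet (ℓ : ℕ) (T : TreeStruct) (a : ℕ) (S : Finset (Fin ℓ → ℝ)) :
    Set (Finset (Finset (Fin ℓ → ℝ))) :=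
  {P | IsPartition S a P ∧ TreeRealizable ℓ T S P}

/-- The `a`-partitioning function of the tree class `T` on `ℝ^ℓ`: the largest number of
distinct `a`-partitions realizable by `T` on a sample of `m` points. -/
noncomputable def treePi (ℓ : ℕ) (T : TreeStruct) (a m : ℕ) : ℕ :=
  sSup {n : ℕ | ∃ S : Finset (Fin ℓ → ℝ), S.card = m ∧ n = (PartSet ℓ T a S).ncard}

/-- The growth function of the class of decision trees with structure `T` and leaf
labels in `{1, …, n}` (coded by `Fin n`): the largest number of distinct restrictions
to a sample of `m` points. -/
noncomputable def growth (ℓ : ℕ) (T : TreeStruct) (n m : ℕ) : ℕ :=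
  sSup {N : ℕ | ∃ S : Finset (Fin ℓ → ℝ), S.card = m ∧
    N = {g : {x // x ∈ S} → Fin n |
      ∃ t : DTree ℓ (Fin n), t.shape = T ∧ ∀ x : {x // x ∈ S}, g x = t.eval x.1}.ncard}


open Classical in
noncomputable section

namespace DTree

variable {ℓ : ℕ} {Y Z : Type}

def relabel (f : Y → Z) : DTree ℓ Y → DTree ℓ Z
  | leaf y => leaf (f y)
  | node i θ s l r => node i θ s (l.relabel f) (r.relabel f)

lemma shape_relabel (f : Y → Z) (t : DTree ℓ Y) : (t.relabel f).shape = t.shape := by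
  induction t with
  | leaf y => rfl
  | node i θ s l r ihl ihr => simp [relabel, shape, ihl, ihr]

lemma eval_relabel (f : Y → Z) (t : DTree ℓ Y) (x : Fin ℓ → ℝ) :
    (t.relabel f).eval x = f (t.eval x) := by
  induction t with
  | leaf y => rfl
  | node i θ s l r ihl ihr =>
    by_cases h : decide (θ < x i) = s <;> simp [relabel, eval, h, ihl, ihr]

def leafLabels [DecidableEq Y] : DTree ℓ Y → Finset Y
  | leaf y => {y}
  | node _ _ _ l r => l.leafLabels ∪ r.leafLabels

lemma eval_mem_leafLabels [DecidableEq Y] (t : DTree ℓ Y) (x : Fin ℓ → ℝ) :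
    t.eval x ∈ t.leafLabels := by
  induction t with
  | leaf y => simp [eval, leafLabels]
  | node i θ s l r ihl ihr =>
    by_cases h : decide (θ < x i) = s <;>
      simp only [eval, h, if_true, if_false, leafLabels, Finset.mem_union] <;>
      [exact Or.inl ihl; exact Or.inr ihr]

lemma card_leafLabels_le [DecidableEq Y] (t : DTree ℓ Y) :
    t.leafLabels.card ≤ t.shape.leaves := by
  induction t with
  | leaf y => simp [leafLabels, shape, TreeStruct.leaves]
  | node i θ s l r ihl ihr =>
    calc (l.leafLabels ∪ r.leafLabels).card ≤ l.leafLabels.card + r.leafLabels.card :=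
          Finset.card_union_le _ _
    _ ≤ l.shape.leaves + r.shape.leaves := Nat.add_le_add ihl ihr
    _ = (DTree.node i θ s l r).shape.leaves := rfl

def const (i₀ : Fin ℓ) (y : Y) : TreeStruct → DTree ℓ Y
  | .leaf => leaf y
  | .node l r => node i₀ 0 true (const i₀ y l) (const i₀ y r)

lemma shape_const (i₀ : Fin ℓ) (y : Y) (T : TreeStruct) : (const i₀ y T).shape = T := by
  induction T with
  | leaf => rfl
  | node l r ihl ihr => simp [const, shape, ihl, ihr]

lemma eval_const (i₀ : Fin ℓ) (y : Y) (T : TreeStruct) (x : Fin ℓ → ℝ) :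
    (const i₀ y T).eval x = y := by
  induction T with
  | leaf => rfl
  | node l r ihl ihr =>
    by_cases h : decide ((0:ℝ) < x i₀) = true <;> simp [const, eval, h, ihl, ihr]

end DTree

lemma TreeStruct.leaves_pos (T : TreeStruct) : 1 ≤ T.leaves := by
  induction T with
  | leaf => exact le_refl _
  | node l r ihl ihr => exact le_trans ihl (Nat.le_add_right _ _)

end



section Counting
open Classical

variable {ℓ n : ℕ} {T : TreeStruct}

/-- The set of restrictions to `S` of decision trees of shape `T` with labels in `Fin n`. -/
def Gset (ℓ : ℕ) (T : TreeStruct) (n : ℕ) (S : Finset (Fin ℓ → ℝ)) :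
    Set ({x // x ∈ S} → Fin n) :=
  {g : {x // x ∈ S} → Fin n |
      ∃ t : DTree ℓ (Fin n), t.shape = T ∧ ∀ x : {x // x ∈ S}, g x = t.eval x.1}

/-- The fiber of `g` over `v`, as a finset of points of `S`. -/
noncomputable def fiber (S : Finset (Fin ℓ → ℝ)) (g : {x // x ∈ S} → Fin n) (v : Fin n) :
    Finset (Fin ℓ → ℝ) :=
  (S.attach.filter (fun x => g x = v)).image Subtype.val

lemma mem_fiber {S : Finset (Fin ℓ → ℝ)} {g : {x // x ∈ S} → Fin n} {v : Fin n}
    {x : Fin ℓ → ℝ} : x ∈ fiber S g v ↔ ∃ hx : x ∈ S, g ⟨x, hx⟩ = v := by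
  constructor
  · intro hx
    simp only [fiber, Finset.mem_image, Finset.mem_filter] at hx
    obtain ⟨y, ⟨-, hy⟩, rfl⟩ := hx
    exact ⟨y.2, hy⟩
  · rintro ⟨hx, hv⟩
    simp only [fiber, Finset.mem_image, Finset.mem_filter]
    exact ⟨⟨x, hx⟩, ⟨Finset.mem_attach _ _, hv⟩, rfl⟩

/-- The partition of `S` into fibers of `g`. -/
noncomputable def partFun (S : Finset (Fin ℓ → ℝ)) (g : {x // x ∈ S} → Fin n) :
    Finset (Finset (Fin ℓ → ℝ)) :=
  (S.attach.image g).image (fiber S g)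

lemma mem_partFun {S : Finset (Fin ℓ → ℝ)} {g : {x // x ∈ S} → Fin n}
    {p : Finset (Fin ℓ → ℝ)} :
    p ∈ partFun S g ↔ ∃ x : {x // x ∈ S}, p = fiber S g (g x) := by
  constructor
  · intro hp
    simp only [partFun, Finset.mem_image] at hp
    obtain ⟨v, ⟨x, -, rfl⟩, rfl⟩ := hp
    exact ⟨x, rfl⟩
  · rintro ⟨x, rfl⟩
    simp only [partFun, Finset.mem_image]
    exact ⟨g x, ⟨x, Finset.mem_attach _ _, rfl⟩, rfl⟩

lemma self_mem_fiber {S : Finset (Fin ℓ → ℝ)} {g : {x // x ∈ S} → Fin n}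
    (x : {x // x ∈ S}) : x.1 ∈ fiber S g (g x) :=
  mem_fiber.mpr ⟨x.2, by congr⟩

lemma fiber_mem_partFun {S : Finset (Fin ℓ → ℝ)} {g : {x // x ∈ S} → Fin n}
    (x : {x // x ∈ S}) : fiber S g (g x) ∈ partFun S g :=
  mem_partFun.mpr ⟨x, rfl⟩

lemma eq_fiber_of_mem_partFun {S : Finset (Fin ℓ → ℝ)} {g : {x // x ∈ S} → Fin n}
    {p : Finset (Fin ℓ → ℝ)} (hp : p ∈ partFun S g) {x : Fin ℓ → ℝ} (hxp : x ∈ p)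
    (hx : x ∈ S) : p = fiber S g (g ⟨x, hx⟩) := by
  obtain ⟨y, rfl⟩ := mem_partFun.mp hp
  obtain ⟨hx', hvx⟩ := mem_fiber.mp hxp
  rw [show g ⟨x, hx⟩ = g y from hvx]

lemma apply_eq_of_mem_partFun {S : Finset (Fin ℓ → ℝ)} {g : {x // x ∈ S} → Fin n}
    {p : Finset (Fin ℓ → ℝ)} (hp : p ∈ partFun S g) {x y : Fin ℓ → ℝ}
    (hxp : x ∈ p) (hyp : y ∈ p) (hx : x ∈ S) (hy : y ∈ S) :
    g ⟨x, hx⟩ = g ⟨y, hy⟩ := by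
  obtain ⟨z, rfl⟩ := mem_partFun.mp hp
  obtain ⟨hx', hvx⟩ := mem_fiber.mp hxp
  obtain ⟨hy', hvy⟩ := mem_fiber.mp hyp
  exact hvx.trans hvy.symm

lemma isPartition_partFun (S : Finset (Fin ℓ → ℝ)) (g : {x // x ∈ S} → Fin n) :
    IsPartition S (partFun S g).card (partFun S g) := by
  refine ⟨rfl, ?_, ?_, ?_⟩
  · intro p hp
    obtain ⟨x, rfl⟩ := mem_partFun.mp hp
    exact ⟨x.1, self_mem_fiber x⟩
  · intro p hp q hq hpq
    rw [Finset.disjoint_left]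
    intro x hxp hxq
    obtain ⟨z, rfl⟩ := mem_partFun.mp hp
    have hxS : x ∈ S := (mem_fiber.mp hxp).choose
    exact hpq ((eq_fiber_of_mem_partFun (fiber_mem_partFun z) hxp hxS).trans
      (eq_fiber_of_mem_partFun hq hxq hxS).symm)
  · intro x
    constructor
    · intro hx
      exact ⟨fiber S g (g ⟨x, hx⟩), fiber_mem_partFun _, self_mem_fiber ⟨x, hx⟩⟩
    · rintro ⟨p, hp, hxp⟩
      obtain ⟨y, rfl⟩ := mem_partFun.mp hp
      exact (mem_fiber.mp hxp).choose

lemma part_unique {S : Finset (Fin ℓ → ℝ)} {a : ℕ} {P : Finset (Finset (Fin ℓ → ℝ))}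
    (hP : IsPartition S a P) {p q : Finset (Fin ℓ → ℝ)} (hp : p ∈ P) (hq : q ∈ P)
    {x : Fin ℓ → ℝ} (hxp : x ∈ p) (hxq : x ∈ q) : p = q := by
  by_contra hne
  exact (Finset.disjoint_left.mp (hP.2.2.1 p hp q hq hne) hxp) hxq

lemma parts_subset {S : Finset (Fin ℓ → ℝ)} {a : ℕ} {P : Finset (Finset (Fin ℓ → ℝ))}
    (hP : IsPartition S a P) {p : Finset (Fin ℓ → ℝ)} (hp : p ∈ P) : p ⊆ S :=
  fun x hx => (hP.2.2.2 x).mpr ⟨p, hp, hx⟩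

end Counting




section Counting2
open Classical

variable {ℓ n : ℕ} {T : TreeStruct}

noncomputable def Pfin (ℓ : ℕ) (T : TreeStruct) (a : ℕ) (S : Finset (Fin ℓ → ℝ)) :
    Finset (Finset (Finset (Fin ℓ → ℝ))) :=
  S.powerset.powerset.filter (fun P => IsPartition S a P ∧ TreeRealizable ℓ T S P)

lemma mem_Pfin {a : ℕ} {S : Finset (Fin ℓ → ℝ)} {P : Finset (Finset (Fin ℓ → ℝ))} :
    P ∈ Pfin ℓ T a S ↔ IsPartition S a P ∧ TreeRealizable ℓ T S P := by
  simp only [Pfin, Finset.mem_filter, Finset.mem_powerset]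
  constructor
  · rintro ⟨-, h⟩; exact h
  · intro h
    refine ⟨?_, h⟩
    intro p hp
    rw [Finset.mem_powerset]
    exact parts_subset h.1 hp

lemma ncard_PartSet (a : ℕ) (S : Finset (Fin ℓ → ℝ)) :
    (PartSet ℓ T a S).ncard = (Pfin ℓ T a S).card := by
  rw [← Set.ncard_coe_finset]
  congr 1
  ext P
  simp only [Finset.mem_coe, mem_Pfin, PartSet, Set.mem_setOf_eq]

noncomputable def Gfin (ℓ : ℕ) (T : TreeStruct) (n : ℕ) (S : Finset (Fin ℓ → ℝ)) :
    Finset ({x // x ∈ S} → Fin n) :=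
  Finset.univ.filter (· ∈ Gset ℓ T n S)

lemma ncard_Gset (S : Finset (Fin ℓ → ℝ)) :
    (Gset ℓ T n S).ncard = (Gfin ℓ T n S).card := by
  rw [← Set.ncard_coe_finset]
  congr 1
  ext g
  simp [Gfin]

lemma realizable_partFun {S : Finset (Fin ℓ → ℝ)} {g : {x // x ∈ S} → Fin n}
    (hg : g ∈ Gset ℓ T n S) : TreeRealizable ℓ T S (partFun S g) := by
  obtain ⟨t, hsh, hev⟩ := hg
  refine ⟨t.relabel Fin.val, by rw [DTree.shape_relabel, hsh], ?_⟩
  intro x hx y hy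
  rw [DTree.eval_relabel, DTree.eval_relabel]
  constructor
  · rintro ⟨p, hp, hxp, hyp⟩
    have h := apply_eq_of_mem_partFun hp hxp hyp hx hy
    rw [hev ⟨x, hx⟩, hev ⟨y, hy⟩] at h
    exact congrArg Fin.val h
  · intro h
    have hval : t.eval x = t.eval y := Fin.val_injective h
    have hgxy : g ⟨x, hx⟩ = g ⟨y, hy⟩ := by rw [hev, hev]; exact hval
    exact ⟨fiber S g (g ⟨x, hx⟩), fiber_mem_partFun ⟨x, hx⟩, self_mem_fiber ⟨x, hx⟩,
      mem_fiber.mpr ⟨hy, hgxy.symm⟩⟩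

lemma card_partFun_le {S : Finset (Fin ℓ → ℝ)} {g : {x // x ∈ S} → Fin n}
    (hg : g ∈ Gset ℓ T n S) :
    (partFun S g).card ≤ min S.card (min n T.leaves) := by
  obtain ⟨t, hsh, hev⟩ := hg
  have h1 : (partFun S g).card ≤ (S.attach.image g).card := Finset.card_image_le
  have him : (S.attach.image g).card ≤ S.card := by
    calc (S.attach.image g).card ≤ S.attach.card := Finset.card_image_le
    _ = S.card := Finset.card_attach
  have hsub : S.attach.image g ⊆ t.leafLabels := by
    intro v hv
    obtain ⟨x, -, rfl⟩ := Finset.mem_image.mp hv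
    rw [hev x]
    exact DTree.eval_mem_leafLabels t x.1
  have hL : (S.attach.image g).card ≤ T.leaves := by
    calc (S.attach.image g).card ≤ t.leafLabels.card := Finset.card_le_card hsub
    _ ≤ t.shape.leaves := DTree.card_leafLabels_le t
    _ = T.leaves := by rw [hsh]
  have hn' : (S.attach.image g).card ≤ n := by
    have h := Finset.card_le_univ (S.attach.image g)
    simpa using h
  exact le_trans h1 (le_min him (le_min hn' hL))

lemma card_partFun_pos {S : Finset (Fin ℓ → ℝ)} (hS : S.Nonempty)
    (g : {x // x ∈ S} → Fin n) : 1 ≤ (partFun S g).card := by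
  obtain ⟨x, hx⟩ := hS
  exact Finset.card_pos.mpr ⟨fiber S g (g ⟨x, hx⟩), fiber_mem_partFun ⟨x, hx⟩⟩

lemma mem_Gset_of_respects (hn : 0 < n) {S : Finset (Fin ℓ → ℝ)} {a : ℕ}
    {P : Finset (Finset (Fin ℓ → ℝ))} (hP : IsPartition S a P)
    (hreal : TreeRealizable ℓ T S P) (g : {x // x ∈ S} → Fin n)
    (hg : ∀ x y : {x // x ∈ S}, (∃ p ∈ P, x.1 ∈ p ∧ y.1 ∈ p) → g x = g y) :
    g ∈ Gset ℓ T n S := by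
  obtain ⟨t, hsh, ht⟩ := hreal
  set F : ℕ → Fin n := fun k =>
    if h : ∃ x : {x // x ∈ S}, t.eval x.1 = k then g h.choose else ⟨0, hn⟩ with hF
  refine ⟨t.relabel F, by rw [DTree.shape_relabel, hsh], ?_⟩
  intro x
  rw [DTree.eval_relabel]
  have hex : ∃ y : {x // x ∈ S}, t.eval y.1 = t.eval x.1 := ⟨x, rfl⟩
  have hFx : F (t.eval x.1) = g hex.choose := by
    simp only [hF]
    exact dif_pos hex
  rw [hFx]
  exact (hg hex.choose x ((ht _ hex.choose.2 _ x.2).mpr hex.choose_spec)).symm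

lemma card_filter_partFun (hn : 2 ≤ n) {S : Finset (Fin ℓ → ℝ)} {a : ℕ}
    {P : Finset (Finset (Fin ℓ → ℝ))} (hPmem : P ∈ Pfin ℓ T a S) :
    ((Gfin ℓ T n S).filter (fun g => partFun S g = P)).card = n.descFactorial a := by
  obtain ⟨hP, hreal⟩ := mem_Pfin.mp hPmem
  have hcard : (Finset.univ.filter
      (fun f : {p // p ∈ P} → Fin n => Function.Injective f)).card = n.descFactorial a := by
    rw [← Fintype.card_subtype]
    rw [Fintype.card_congr (Equiv.subtypeInjectiveEquivEmbedding _ _)]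
    rw [Fintype.card_embedding_eq, Fintype.card_coe, Fintype.card_fin, hP.1]
  rw [← hcard]
  have hne : ∀ p : {p // p ∈ P}, (p.1 : Finset (Fin ℓ → ℝ)).Nonempty :=
    fun p => hP.2.1 p.1 p.2
  have hpkS : ∀ p : {p // p ∈ P}, (hne p).choose ∈ S :=
    fun p => parts_subset hP p.2 (hne p).choose_spec
  refine Finset.card_bij
    (fun g _ => fun p : {p // p ∈ P} => g ⟨(hne p).choose, hpkS p⟩) ?_ ?_ ?_
  · -- maps into injections
    intro g hg
    have hg2 : partFun S g = P := (Finset.mem_filter.mp hg).2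
    rw [Finset.mem_filter]
    refine ⟨Finset.mem_univ _, ?_⟩
    intro p q hpq
    have hpP : p.1 ∈ partFun S g := by rw [hg2]; exact p.2
    have hqP : q.1 ∈ partFun S g := by rw [hg2]; exact q.2
    have h1 : p.1 = fiber S g (g ⟨(hne p).choose, hpkS p⟩) :=
      eq_fiber_of_mem_partFun hpP (hne p).choose_spec (hpkS p)
    have h2 : q.1 = fiber S g (g ⟨(hne q).choose, hpkS q⟩) :=
      eq_fiber_of_mem_partFun hqP (hne q).choose_spec (hpkS q)
    have hpq' : g ⟨(hne p).choose, hpkS p⟩ = g ⟨(hne q).choose, hpkS q⟩ := hpq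
    apply Subtype.ext
    rw [h1, h2, hpq']
  · -- injectivity
    intro g hg g' hg' heq
    have hg2 : partFun S g = P := (Finset.mem_filter.mp hg).2
    have hg2' : partFun S g' = P := (Finset.mem_filter.mp hg').2
    funext x
    obtain ⟨p, hpP, hxp⟩ := (hP.2.2.2 x.1).mp x.2
    have hpg : p ∈ partFun S g := by rw [hg2]; exact hpP
    have hpg' : p ∈ partFun S g' := by rw [hg2']; exact hpP
    have e1 : g x = g ⟨(hne ⟨p, hpP⟩).choose, hpkS ⟨p, hpP⟩⟩ :=
      apply_eq_of_mem_partFun hpg hxp (hne ⟨p, hpP⟩).choose_spec x.2 (hpkS ⟨p, hpP⟩)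
    have e2 : g' x = g' ⟨(hne ⟨p, hpP⟩).choose, hpkS ⟨p, hpP⟩⟩ :=
      apply_eq_of_mem_partFun hpg' hxp (hne ⟨p, hpP⟩).choose_spec x.2 (hpkS ⟨p, hpP⟩)
    rw [e1, e2]
    exact congrFun heq ⟨p, hpP⟩
  · -- surjectivity
    intro f hf
    have hfinj : Function.Injective f := (Finset.mem_filter.mp hf).2
    set cp : {x // x ∈ S} → {p // p ∈ P} := fun x =>
      ⟨((hP.2.2.2 x.1).mp x.2).choose, ((hP.2.2.2 x.1).mp x.2).choose_spec.1⟩ with hcpdef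
    have hcp : ∀ x : {x // x ∈ S}, x.1 ∈ (cp x).1 :=
      fun x => ((hP.2.2.2 x.1).mp x.2).choose_spec.2
    have hcp_eq : ∀ (x : {x // x ∈ S}) (p : {p // p ∈ P}), x.1 ∈ p.1 → cp x = p :=
      fun x p hxp => Subtype.ext (part_unique hP (cp x).2 p.2 (hcp x) hxp)
    set g : {x // x ∈ S} → Fin n := fun x => f (cp x) with hgdef
    have hgG : g ∈ Gset ℓ T n S := by
      refine mem_Gset_of_respects (by omega) hP ⟨(mem_Pfin.mp hPmem).2.choose,
        (mem_Pfin.mp hPmem).2.choose_spec⟩ g ?_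
      rintro x y ⟨p, hp, hxp, hyp⟩
      show f (cp x) = f (cp y)
      rw [hcp_eq x ⟨p, hp⟩ hxp, hcp_eq y ⟨p, hp⟩ hyp]
    have hfib : ∀ x : {x // x ∈ S}, fiber S g (g x) = (cp x).1 := by
      intro x
      ext z
      rw [mem_fiber]
      constructor
      · rintro ⟨hz, hgz⟩
        have hzz : cp ⟨z, hz⟩ = cp x := hfinj hgz
        have := hcp ⟨z, hz⟩
        rw [hzz] at this
        exact this
      · intro hz
        have hzS : z ∈ S := parts_subset hP (cp x).2 hz
        have hcc : cp ⟨z, hzS⟩ = cp x := hcp_eq ⟨z, hzS⟩ (cp x) hz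
        exact ⟨hzS, by show f (cp ⟨z, hzS⟩) = f (cp x); rw [hcc]⟩
    have hpart : partFun S g = P := by
      ext q
      rw [mem_partFun]
      constructor
      · rintro ⟨x, rfl⟩
        rw [hfib x]
        exact (cp x).2
      · intro hq
        obtain ⟨x₀, hx₀⟩ := hP.2.1 q hq
        have hx₀S : x₀ ∈ S := parts_subset hP hq hx₀
        refine ⟨⟨x₀, hx₀S⟩, ?_⟩
        rw [hfib ⟨x₀, hx₀S⟩, hcp_eq ⟨x₀, hx₀S⟩ ⟨q, hq⟩ hx₀]
    refine ⟨g, Finset.mem_filter.mpr ⟨Finset.mem_filter.mpr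
      ⟨Finset.mem_univ _, hgG⟩, hpart⟩, ?_⟩
    funext p
    show g ⟨(hne p).choose, hpkS p⟩ = f p
    show f (cp ⟨(hne p).choose, hpkS p⟩) = f p
    rw [hcp_eq ⟨(hne p).choose, hpkS p⟩ p (hne p).choose_spec]

theorem core_count (hn : 2 ≤ n) (S : Finset (Fin ℓ → ℝ)) (hS : S.Nonempty) :
    (Gset ℓ T n S).ncard =
      ∑ a ∈ Finset.Icc 1 (min S.card (min n T.leaves)),
        n.descFactorial a * (PartSet ℓ T a S).ncard := by
  rw [ncard_Gset]
  have hmem : ∀ g ∈ Gfin ℓ T n S,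
      partFun S g ∈ (Finset.Icc 1 (min S.card (min n T.leaves))).biUnion
        (fun a => Pfin ℓ T a S) := by
    intro g hg
    have hgG : g ∈ Gset ℓ T n S := (Finset.mem_filter.mp hg).2
    rw [Finset.mem_biUnion]
    exact ⟨(partFun S g).card,
      Finset.mem_Icc.mpr ⟨card_partFun_pos hS g, card_partFun_le hgG⟩,
      mem_Pfin.mpr ⟨isPartition_partFun S g, realizable_partFun hgG⟩⟩
  rw [Finset.card_eq_sum_card_fiberwise hmem]
  rw [Finset.sum_biUnion (by
    intro a _ b _ hab
    simp only [Function.onFun]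
    rw [Finset.disjoint_left]
    intro P hPa hPb
    exact hab (((mem_Pfin.mp hPa).1.1).symm.trans ((mem_Pfin.mp hPb).1.1)))]
  refine Finset.sum_congr rfl fun a _ => ?_
  rw [ncard_PartSet]
  rw [Finset.sum_congr rfl (fun P hP => card_filter_partFun hn hP)]
  rw [Finset.sum_const, smul_eq_mul, mul_comm]

end Counting2



section Final
open Classical

variable {ℓ n : ℕ} {T : TreeStruct}

lemma bdd_pi (a m : ℕ) :
    BddAbove {k | ∃ S : Finset (Fin ℓ → ℝ), S.card = m ∧ k = (PartSet ℓ T a S).ncard} := by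
  refine ⟨2 ^ (2 ^ m), ?_⟩
  rintro k ⟨S, hS, rfl⟩
  rw [ncard_PartSet]
  calc (Pfin ℓ T a S).card ≤ S.powerset.powerset.card :=
        Finset.card_le_card (Finset.filter_subset _ _)
  _ = 2 ^ (2 ^ m) := by rw [Finset.card_powerset, Finset.card_powerset, hS]

lemma le_treePi {a m : ℕ} {S : Finset (Fin ℓ → ℝ)} (hS : S.card = m) :
    (PartSet ℓ T a S).ncard ≤ treePi ℓ T a m :=
  le_csSup (bdd_pi a m) ⟨S, hS, rfl⟩

lemma partSet_one (i₀ : Fin ℓ) (S : Finset (Fin ℓ → ℝ)) (hS : S.Nonempty) :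
    PartSet ℓ T 1 S = {{S}} := by
  ext P
  simp only [PartSet, Set.mem_setOf_eq, Set.mem_singleton_iff]
  constructor
  · rintro ⟨⟨hc, hne, hdis, hcov⟩, -⟩
    obtain ⟨p, rfl⟩ := Finset.card_eq_one.mp hc
    have hpS : p = S := by
      apply Finset.ext
      intro x
      constructor
      · intro h
        exact (hcov x).mpr ⟨p, Finset.mem_singleton_self _, h⟩
      · intro h
        obtain ⟨q, hq, hxq⟩ := (hcov x).mp h
        rw [Finset.mem_singleton] at hq
        rw [hq] at hxq
        exact hxq
    rw [hpS]
  · rintro rfl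
    refine ⟨⟨Finset.card_singleton _, ?_, ?_, ?_⟩, ?_⟩
    · intro p hp
      rw [Finset.mem_singleton] at hp
      rw [hp]
      exact hS
    · intro p hp q hq hpq
      rw [Finset.mem_singleton] at hp hq
      exact absurd (hp.trans hq.symm) hpq
    · intro x
      simp
    · refine ⟨DTree.const i₀ 0 T, DTree.shape_const _ _ _, fun x hx y hy => ?_⟩
      rw [DTree.eval_const, DTree.eval_const]
      simp [hx, hy]

lemma treePi_one (hℓ : 1 ≤ ℓ) (m : ℕ) (hm : 1 ≤ m) : treePi ℓ T 1 m = 1 := by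
  haveI : Nonempty (Fin ℓ) := ⟨⟨0, hℓ⟩⟩
  obtain ⟨S₀, hS₀⟩ := Infinite.exists_subset_card_eq (Fin ℓ → ℝ) m
  have hval : ∀ S : Finset (Fin ℓ → ℝ), S.card = m → (PartSet ℓ T 1 S).ncard = 1 := by
    intro S hS
    rw [partSet_one (⟨0, hℓ⟩ : Fin ℓ) S (Finset.card_pos.mp (by omega))]
    exact Set.ncard_singleton _
  apply le_antisymm
  · refine csSup_le ⟨1, ⟨S₀, hS₀, (hval S₀ hS₀).symm⟩⟩ ?_
    rintro k ⟨S, hS, rfl⟩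
    exact (hval S hS).le
  · exact le_csSup (bdd_pi 1 m) ⟨S₀, hS₀, (hval S₀ hS₀).symm⟩

lemma bdd_growth (m : ℕ) :
    BddAbove {N | ∃ S : Finset (Fin ℓ → ℝ), S.card = m ∧ N = (Gset ℓ T n S).ncard} := by
  refine ⟨n ^ m, ?_⟩
  rintro N ⟨S, hS, rfl⟩
  rw [ncard_Gset]
  calc (Gfin ℓ T n S).card ≤ Fintype.card ({x // x ∈ S} → Fin n) := Finset.card_le_univ _
  _ = n ^ m := by rw [Fintype.card_fun, Fintype.card_coe, Fintype.card_fin, hS]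

end Final


theorem growth_le_sum_descFactorial_partitioning
    (ℓ n : ℕ) (hℓ : 1 ≤ ℓ) (hn : 2 ≤ n) (T : TreeStruct) (m : ℕ) (hm : 1 ≤ m) :
    growth ℓ T n m ≤
      (∑ a ∈ Finset.Icc 1 (min m (min n T.leaves)),
        n.descFactorial a * treePi ℓ T a m) ∧
    ((n = 2 ∨ T.leaves = 2) →
      growth ℓ T n m =
        ∑ a ∈ Finset.Icc 1 (min m (min n T.leaves)),
          n.descFactorial a * treePi ℓ T a m) := by
  classical
  haveI : Nonempty (Fin ℓ) := ⟨⟨0, hℓ⟩⟩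
  set K := min m (min n T.leaves) with hK
  obtain ⟨S₀, hS₀⟩ := Infinite.exists_subset_card_eq (Fin ℓ → ℝ) m
  have hGrowthSet : growth ℓ T n m = sSup {N : ℕ |
      ∃ S : Finset (Fin ℓ → ℝ), S.card = m ∧ N = (Gset ℓ T n S).ncard} := rfl
  have hcore : ∀ S : Finset (Fin ℓ → ℝ), S.card = m →
      (Gset ℓ T n S).ncard
        = ∑ a ∈ Finset.Icc 1 K, n.descFactorial a * (PartSet ℓ T a S).ncard := by
    intro S hS
    rw [core_count hn S (Finset.card_pos.mp (by omega)), hS]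
  have hbddG := bdd_growth (ℓ := ℓ) (T := T) (n := n) m
  have part1 : growth ℓ T n m
      ≤ ∑ a ∈ Finset.Icc 1 K, n.descFactorial a * treePi ℓ T a m := by
    rw [hGrowthSet]
    refine csSup_le ⟨(Gset ℓ T n S₀).ncard, ⟨S₀, hS₀, rfl⟩⟩ ?_
    rintro N ⟨S, hS, rfl⟩
    rw [hcore S hS]
    exact Finset.sum_le_sum fun a _ => Nat.mul_le_mul_left _ (le_treePi hS)
  refine ⟨part1, ?_⟩
  intro hcase
  refine le_antisymm part1 ?_
  have hL1 : 1 ≤ T.leaves := T.leaves_pos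
  have hK1 : 1 ≤ K := le_min hm (le_min (by omega) hL1)
  have hK2 : K ≤ 2 := by
    refine le_trans (min_le_right _ _) ?_
    rcases hcase with h | h
    · exact le_trans (min_le_left _ _) h.le
    · exact le_trans (min_le_right _ _) h.le
  have hK12 : K = 1 ∨ K = 2 := by omega
  rcases hK12 with hK' | hK'
  · have hpi1 := treePi_one (T := T) hℓ m hm
    rw [hK', Finset.Icc_self, Finset.sum_singleton, Nat.descFactorial_one, hpi1, mul_one]
    rw [hGrowthSet]
    apply le_csSup hbddG
    refine ⟨S₀, hS₀, ?_⟩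
    rw [hcore S₀ hS₀, hK', Finset.Icc_self, Finset.sum_singleton, Nat.descFactorial_one]
    have hone : (PartSet ℓ T 1 S₀).ncard = 1 := by
      rw [partSet_one (⟨0, by omega⟩ : Fin ℓ) S₀ (Finset.card_pos.mp (by omega))]
      exact Set.ncard_singleton _
    rw [hone, mul_one]
  · -- K = 2 : pick a sample attaining treePi 2
    have hmem := Nat.sSup_mem (⟨_, S₀, hS₀, rfl⟩ : Set.Nonempty
        {k | ∃ S : Finset (Fin ℓ → ℝ), S.card = m ∧ k = (PartSet ℓ T 2 S).ncard})
      (bdd_pi 2 m)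
    obtain ⟨S₂, hS₂, hS₂v⟩ := hmem
    have htp2 : treePi ℓ T 2 m = (PartSet ℓ T 2 S₂).ncard := hS₂v
    have hone : (PartSet ℓ T 1 S₂).ncard = 1 := by
      rw [partSet_one (⟨0, by omega⟩ : Fin ℓ) S₂ (Finset.card_pos.mp (by omega))]
      exact Set.ncard_singleton _
    have hpi1 := treePi_one (T := T) hℓ m hm
    rw [hGrowthSet]
    apply le_csSup hbddG
    refine ⟨S₂, hS₂, ?_⟩
    rw [hcore S₂ hS₂]
    refine (Finset.sum_congr rfl fun a ha => ?_).symm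
    rw [hK'] at ha
    rw [Finset.mem_Icc] at ha
    have : a = 1 ∨ a = 2 := by omega
    rcases this with rfl | rfl
    · rw [hone, hpi1]
    · rw [htp2]
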